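/- (Inverse weighted Fermat–Torricelli problem for three non-collinear points.) Let A_1A_2A_3 be a non-degenerate triangle in ℝ², let A_0 be a point in its interior, and let c > 0; write α_{i0j} = ∠A_iA_0A_j. Then there exists a unique triple of positive weights (B̄_1, B̄_2, B̄_3) with B̄_1 + B̄_2 + B̄_3 = c such that A_0 minimizes X ↦ Σ_{i=1}^3 B̄_i‖X − A_i‖, and it is given by B̄_i = c / (1 + sin α_{j0i}/sin α_{j0k} + sin α_{k0i}/sin α_{j0k}) for {i,j,k} = {1,2,3}; equivalently B̄_i = c·sin α_{j0k} / (sin α_{j0k} + sin α_{i0j} + sin α_{i0k}). -/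

import Mathlib

open EuclideanGeometry
open scoped RealInnerProductSpace

private lemma omega_lagrange (x y : EuclideanSpace ℝ (Fin 2)) :
    ⟪x, x⟫ * ⟪y, y⟫ - ⟪x, y⟫ * ⟪x, y⟫ = (x 0 * y 1 - x 1 * y 0)^2 := by
  simp only [PiLp.inner_apply, RCLike.inner_apply, Fin.sum_univ_two, conj_trivial]
  ring

private lemma sin_angle_eq (x y : EuclideanSpace ℝ (Fin 2)) :
    Real.sin (InnerProductGeometry.angle x y) * (‖x‖ * ‖y‖) = |x 0 * y 1 - x 1 * y 0| := by
  rw [InnerProductGeometry.sin_angle_mul_norm_mul_norm, omega_lagrange, Real.sqrt_sq_eq_abs]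

private lemma norm_sub_le_aux {E : Type*} [NormedAddCommGroup E] [InnerProductSpace ℝ E]
    {a : E} (v : E) (ha : a ≠ 0) :
    ‖a - v‖ ≤ ‖a‖ + (‖v‖^2 - 2*⟪a,v⟫)/(2*‖a‖) := by
  have hn : 0 < ‖a‖ := norm_pos_iff.mpr ha
  set r : ℝ := (‖v‖^2 - 2*⟪a,v⟫)/(2*‖a‖) with hr
  have h2 : ‖a - v‖^2 = ‖a‖^2 - 2*⟪a,v⟫ + ‖v‖^2 := by
    rw [norm_sub_sq_real]
  have h2r : 2*‖a‖*r = ‖v‖^2 - 2*⟪a,v⟫ := by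
    rw [hr]; field_simp
  have hnn : 0 ≤ ‖a‖ + r := by
    nlinarith [sq_nonneg (‖a - v‖), sq_nonneg ‖a‖]
  have hle : ‖a - v‖^2 ≤ (‖a‖ + r)^2 := by nlinarith [sq_nonneg r]
  calc ‖a - v‖ = √(‖a - v‖^2) := by rw [Real.sqrt_sq (norm_nonneg _)]
    _ ≤ √((‖a‖ + r)^2) := Real.sqrt_le_sqrt hle
    _ = ‖a‖ + r := Real.sqrt_sq hnn

private lemma sum3 {M : Type*} [AddCommMonoid M] (f : Fin 3 → M) {i j k : Fin 3}
    (hij : i ≠ j) (hik : i ≠ k) (hjk : j ≠ k) : ∑ n, f n = f i + f j + f k := by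
  fin_cases i <;> fin_cases j <;> fin_cases k <;>
    simp_all [Fin.sum_univ_three] <;> abel_nf

private lemma fin3_cases {i j k : Fin 3} (hij : i ≠ j) (hik : i ≠ k) (hjk : j ≠ k)
    (n : Fin 3) : n = i ∨ n = j ∨ n = k := by omega

private lemma abs_ratio {a b x y : ℝ} (ha : 0 < a) (hb : 0 < b) (h : a * x = -(b * y)) :
    a * |x| = b * |y| := by
  rw [← abs_of_pos ha, ← abs_of_pos hb, ← abs_mul, ← abs_mul, h, abs_neg]

private lemma fin3_other (i : Fin 3) : ∃ j k : Fin 3, i ≠ j ∧ i ≠ k ∧ j ≠ k := by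
  fin_cases i
  · exact ⟨1, 2, by decide, by decide, by decide⟩
  · exact ⟨0, 2, by decide, by decide, by decide⟩
  · exact ⟨0, 1, by decide, by decide, by decide⟩

/-- Sufficiency: if the weighted sum of unit vectors toward `A₀` vanishes, `A₀` minimizes. -/
private lemma fermat_suff {E : Type*} [NormedAddCommGroup E] [InnerProductSpace ℝ E]
    (A : Fin 3 → E) (A₀ : E) (hne : ∀ i, A₀ - A i ≠ 0)
    (B : Fin 3 → ℝ) (hB : ∀ i, 0 ≤ B i)
    (h0 : ∑ i, B i • (‖A₀ - A i‖⁻¹ • (A₀ - A i)) = 0)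
    (X : E) : ∑ i, B i * ‖A₀ - A i‖ ≤ ∑ i, B i * ‖X - A i‖ := by
  set nv : Fin 3 → E := fun i => ‖A₀ - A i‖⁻¹ • (A₀ - A i) with hnvdef
  have hnv1 : ∀ i, ‖nv i‖ = 1 := fun i => norm_smul_inv_norm (hne i)
  have hmnorm : ∀ i, (0:ℝ) < ‖A₀ - A i‖ := fun i => norm_pos_iff.mpr (hne i)
  have hinner_self : ∀ i, ⟪nv i, A₀ - A i⟫ = ‖A₀ - A i‖ := by
    intro i
    rw [hnvdef]
    simp only [real_inner_smul_left]
    rw [real_inner_self_eq_norm_sq, sq, ← mul_assoc,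
      inv_mul_cancel₀ (ne_of_gt (hmnorm i)), one_mul]
  have hz : ∑ i, B i * ⟪nv i, X - A₀⟫ = 0 := by
    have h : ⟪∑ i, B i • nv i, X - A₀⟫ = ∑ i, B i * ⟪nv i, X - A₀⟫ := by
      rw [sum_inner]
      exact Finset.sum_congr rfl fun i _ => real_inner_smul_left _ _ _
    rw [← h, h0, inner_zero_left]
  calc ∑ i, B i * ‖A₀ - A i‖
      = ∑ i, (B i * ‖A₀ - A i‖ + B i * ⟪nv i, X - A₀⟫) := by
        rw [Finset.sum_add_distrib, hz, add_zero]
    _ ≤ ∑ i, B i * ‖X - A i‖ := by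
        apply Finset.sum_le_sum
        intro i _
        have e1 : B i * ‖A₀ - A i‖ + B i * ⟪nv i, X - A₀⟫ = B i * ⟪nv i, X - A i⟫ := by
          rw [← hinner_self i, ← mul_add, ← inner_add_right]
          have h : (A₀ - A i) + (X - A₀) = X - A i := by abel
          rw [h]
        rw [e1]
        refine mul_le_mul_of_nonneg_left ?_ (hB i)
        have h2 := real_inner_le_norm (nv i) (X - A i)
        rwa [hnv1 i, one_mul] at h2

/-- Necessity: if `A₀` minimizes, then the weighted sum of unit vectors vanishes. -/
private lemma fermat_crit {E : Type*} [NormedAddCommGroup E] [InnerProductSpace ℝ E]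
    (A : Fin 3 → E) (A₀ : E) (hne : ∀ i, A₀ - A i ≠ 0)
    (B : Fin 3 → ℝ) (hB : ∀ i, 0 < B i)
    (hmin : ∀ X : E, ∑ i, B i * ‖A₀ - A i‖ ≤ ∑ i, B i * ‖X - A i‖) :
    ∑ i, B i • (‖A₀ - A i‖⁻¹ • (A₀ - A i)) = 0 := by
  set m : Fin 3 → E := fun i => A₀ - A i with hmdef
  have hmnorm : ∀ i, (0:ℝ) < ‖m i‖ := fun i => norm_pos_iff.mpr (hne i)
  set nv : Fin 3 → E := fun i => ‖m i‖⁻¹ • m i with hnvdef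
  by_contra hG
  set G : E := ∑ i, B i • nv i with hGdef
  have hGpos : 0 < ‖G‖ := norm_pos_iff.mpr hG
  set K : ℝ := ∑ i, B i * (2 * ‖m i‖)⁻¹ with hKdef
  have hKpos : 0 < K := by
    refine Finset.sum_pos (fun i _ => ?_) Finset.univ_nonempty
    exact mul_pos (hB i) (inv_pos.mpr (by linarith [hmnorm i]))
  set t : ℝ := (2 * K)⁻¹ with htdef
  have htpos : 0 < t := by positivity
  have hinnerG : ∑ i, B i * ⟪nv i, G⟫ = ‖G‖^2 := by
    have h : ⟪∑ i, B i • nv i, G⟫ = ∑ i, B i * ⟪nv i, G⟫ := by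
      rw [sum_inner]
      exact Finset.sum_congr rfl fun i _ => real_inner_smul_left _ _ _
    rw [← h, ← hGdef, real_inner_self_eq_norm_sq]
  have hbound : ∀ i, B i * ‖m i - t • G‖ ≤ B i * ‖m i‖
      + (B i * (2*‖m i‖)⁻¹) * (t^2 * ‖G‖^2) - t * (B i * ⟪nv i, G⟫) := by
    intro i
    have h1 := norm_sub_le_aux (t • G) (hne i)
    have h2 : ‖t • G‖^2 = t^2 * ‖G‖^2 := by
      rw [norm_smul, mul_pow, Real.norm_eq_abs, sq_abs]
    have h4 : ⟪nv i, G⟫ = ‖m i‖⁻¹ * ⟪m i, G⟫ := real_inner_smul_left _ _ _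
    have h5 : (‖t • G‖^2 - 2*⟪m i, t • G⟫)/(2*‖m i‖)
        = (2*‖m i‖)⁻¹ * (t^2 * ‖G‖^2) - t * ⟪nv i, G⟫ := by
      rw [h2, real_inner_smul_right, h4, div_eq_mul_inv, mul_inv]
      ring
    have h6 := mul_le_mul_of_nonneg_left h1 (le_of_lt (hB i))
    rw [h5] at h6
    refine h6.trans (le_of_eq ?_)
    ring
  have hXA : ∀ i, ((A₀ - t • G : E)) - A i = m i - t • G := by
    intro i; exact sub_right_comm A₀ (t • G) (A i)
  have hstep : ∑ i, B i * ‖m i - t • G‖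
      ≤ ∑ i, B i * ‖m i‖ + K * (t^2 * ‖G‖^2) - t * ‖G‖^2 := by
    calc ∑ i, B i * ‖m i - t • G‖
        ≤ ∑ i, (B i * ‖m i‖ + (B i * (2*‖m i‖)⁻¹) * (t^2 * ‖G‖^2)
            - t * (B i * ⟪nv i, G⟫)) := Finset.sum_le_sum fun i _ => hbound i
      _ = ∑ i, B i * ‖m i‖ + K * (t^2 * ‖G‖^2) - t * ‖G‖^2 := by
          rw [Finset.sum_sub_distrib, Finset.sum_add_distrib, ← Finset.sum_mul,
            ← hKdef, ← Finset.mul_sum, hinnerG]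
  have hlb : ∑ i, B i * ‖m i‖ ≤ ∑ i, B i * ‖m i - t • G‖ := by
    have h := hmin (A₀ - t • G)
    calc ∑ i, B i * ‖m i‖ = ∑ i, B i * ‖A₀ - A i‖ := rfl
      _ ≤ ∑ i, B i * ‖(A₀ - t • G : E) - A i‖ := h
      _ = ∑ i, B i * ‖m i - t • G‖ := Finset.sum_congr rfl fun i _ => by rw [hXA i]
  have htK : t * K = 1/2 := by
    rw [htdef]; field_simp
  have h9 : K*(t^2*‖G‖^2) = (1/2) * (t * ‖G‖^2) := by
    have he : K*(t^2*‖G‖^2) = (t*K) * (t*‖G‖^2) := by ring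
    rw [he, htK]
  have h10 : (0:ℝ) < t*‖G‖^2 := by positivity
  rw [h9] at hstep
  linarith [hlb, hstep]

/-- The ratio relation extracted from the vanishing of the weighted sum of unit vectors. -/
private lemma fermat_ratio (m : Fin 3 → EuclideanSpace ℝ (Fin 2))
    (hmnorm : ∀ i, (0:ℝ) < ‖m i‖)
    (B : Fin 3 → ℝ) (hB : ∀ i, 0 < B i)
    {p q r : Fin 3} (hpq : p ≠ q) (hpr : p ≠ r) (hqr : q ≠ r)
    (h0 : ∑ i, B i • (‖m i‖⁻¹ • m i) = 0) :
    B p * ‖m p‖⁻¹ * |m p 0 * m r 1 - m p 1 * m r 0|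
      = B q * ‖m q‖⁻¹ * |m q 0 * m r 1 - m q 1 * m r 0| := by
  have hsum3 : B p • (‖m p‖⁻¹ • m p) + B q • (‖m q‖⁻¹ • m q) + B r • (‖m r‖⁻¹ • m r) = 0 := by
    rw [← sum3 (fun n => B n • (‖m n‖⁻¹ • m n)) hpq hpr hqr]; exact h0
  have hx : ∀ z : Fin 2, B p * (‖m p‖⁻¹ * m p z) + B q * (‖m q‖⁻¹ * m q z)
      + B r * (‖m r‖⁻¹ * m r z) = 0 := by
    intro z
    have h := congrArg (fun v : EuclideanSpace ℝ (Fin 2) => v z) hsum3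
    simpa [PiLp.add_apply, PiLp.smul_apply, smul_eq_mul, mul_assoc] using h
  have hL : B p * ‖m p‖⁻¹ * (m p 0 * m r 1 - m p 1 * m r 0)
      = -(B q * ‖m q‖⁻¹ * (m q 0 * m r 1 - m q 1 * m r 0)) := by
    have e0 := hx 0
    have e1 := hx 1
    linear_combination (m r 1) * e0 - (m r 0) * e1
  exact abs_ratio (mul_pos (hB p) (inv_pos.mpr (hmnorm p)))
    (mul_pos (hB q) (inv_pos.mpr (hmnorm q))) hL

set_option maxHeartbeats 2000000 in
/-- Inverse weighted Fermat–Torricelli problem for three non-collinear points: for an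
interior point `A₀` of a non-degenerate triangle and `c > 0` there is a unique triple
of positive weights summing to `c` for which `A₀` is the weighted Fermat–Torricelli
point, and it is given by the explicit formulas in terms of the angles `α_{i0j}`.
Indices are shifted: `A 0, A 1, A 2` are `A₁, A₂, A₃`. -/
theorem inverse_weighted_fermat_torricelli_triangle
    (A : Fin 3 → EuclideanSpace ℝ (Fin 2))
    (hA : AffineIndependent ℝ A)
    (A₀ : EuclideanSpace ℝ (Fin 2))
    (hA₀ : A₀ ∈ interior (convexHull ℝ (Set.range A)))
    (c : ℝ) (hc : 0 < c) :
    (∃! B : Fin 3 → ℝ, (∀ i, 0 < B i) ∧ (∑ i, B i = c) ∧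
        ∀ X : EuclideanSpace ℝ (Fin 2),
          ∑ i, B i * ‖A₀ - A i‖ ≤ ∑ i, B i * ‖X - A i‖) ∧
    ∀ B : Fin 3 → ℝ, (∀ i, 0 < B i) → (∑ i, B i = c) →
      (∀ X : EuclideanSpace ℝ (Fin 2),
        ∑ i, B i * ‖A₀ - A i‖ ≤ ∑ i, B i * ‖X - A i‖) →
      ∀ i j k : Fin 3, i ≠ j → i ≠ k → j ≠ k →
        B i = c / (1 + Real.sin (∠ (A j) A₀ (A i)) / Real.sin (∠ (A j) A₀ (A k))
            + Real.sin (∠ (A k) A₀ (A i)) / Real.sin (∠ (A j) A₀ (A k))) ∧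
        B i = c * Real.sin (∠ (A j) A₀ (A k))
            / (Real.sin (∠ (A j) A₀ (A k)) + Real.sin (∠ (A i) A₀ (A j))
              + Real.sin (∠ (A i) A₀ (A k))) := by
  classical
  -- Barycentric coordinates of `A₀`
  have hcard : Fintype.card (Fin 3) = Module.finrank ℝ (EuclideanSpace ℝ (Fin 2)) + 1 := by
    simp [finrank_euclideanSpace_fin]
  let b : AffineBasis (Fin 3) ℝ (EuclideanSpace ℝ (Fin 2)) :=
    ⟨A, hA, hA.affineSpan_eq_top_iff_card_eq_finrank_add_one.mpr hcard⟩
  have hbA : ⇑b = A := rfl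
  have hw : ∀ i, 0 < b.coord i A₀ := by
    have h := hA₀
    rw [← hbA, b.interior_convexHull] at h
    exact h
  set w : Fin 3 → ℝ := fun i => b.coord i A₀ with hwdef
  have hwpos : ∀ i, 0 < w i := hw
  have hsum1 : ∑ i, w i = 1 := b.sum_coord_apply_eq_one A₀
  have hcomb : ∑ i, w i • A i = A₀ := by
    have h := b.affineCombination_coord_eq_self A₀
    rwa [Finset.affineCombination_eq_linear_combination _ _ _ hsum1, hbA] at h
  set m : Fin 3 → EuclideanSpace ℝ (Fin 2) := fun i => A₀ - A i with hmdef
  have hmiq : ∀ i, A₀ - A i = m i := fun i => by rw [hmdef]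
  have hmsum : ∑ i, w i • m i = 0 := by
    have h : ∑ i, w i • m i = (∑ i, w i) • A₀ - ∑ i, w i • A i := by
      rw [Finset.sum_smul]
      simp [hmdef, smul_sub, Finset.sum_sub_distrib]
    rw [h, hsum1, one_smul, hcomb, sub_self]
  have hmne : ∀ i, m i ≠ 0 := by
    intro i hmi
    rw [hmdef] at hmi
    have hAi : A₀ = A i := sub_eq_zero.mp hmi
    obtain ⟨j, k, hij, hik, hjk⟩ := fin3_other i
    have hwj : w j = 0 := by
      have h : b.coord j (b i) = 0 := b.coord_apply_ne (Ne.symm hij)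
      rw [hwdef]
      simp only []
      rw [hAi]
      rw [hbA] at h
      exact h
    exact absurd hwj (ne_of_gt (hw j))
  have hmnorm : ∀ i, (0:ℝ) < ‖m i‖ := fun i => norm_pos_iff.mpr (hmne i)
  have hne : ∀ i, A₀ - A i ≠ 0 := fun i => by rw [hmiq i]; exact hmne i
  -- nonzero coordinate of a nonzero planar vector
  have hcoordne : ∀ x : EuclideanSpace ℝ (Fin 2), x ≠ 0 → x 0 ≠ 0 ∨ x 1 ≠ 0 := by
    intro x hx
    by_contra h
    push_neg at h
    exact hx (by ext z; fin_cases z <;> simp [h.1, h.2])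
  -- the interior point sees every pair of vertices in linearly independent directions
  have homega : ∀ i j, i ≠ j → m i 0 * m j 1 - m i 1 * m j 0 ≠ 0 := by
    intro i j hij h
    obtain ⟨j', k', hij', hik', hjk'⟩ := fin3_other i
    have hkex : ∃ k : Fin 3, i ≠ k ∧ j ≠ k := by
      rcases fin3_cases hij' hik' hjk' j with rfl | h1 | h1
      · exact absurd rfl hij
      · exact ⟨k', hik', h1 ▸ hjk'⟩
      · exact ⟨j', hij', fun hh => hjk' (h1 ▸ hh.symm ▸ rfl)⟩
    obtain ⟨k, hik, hjk⟩ := hkex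
    have hmj : ∃ t : ℝ, m j = t • m i := by
      rcases hcoordne (m i) (hmne i) with h0 | h1
      · refine ⟨m j 0 / m i 0, ?_⟩
        ext z; fin_cases z <;> simp [PiLp.smul_apply, smul_eq_mul] <;> field_simp <;>
          nlinarith [h]
      · refine ⟨m j 1 / m i 1, ?_⟩
        ext z; fin_cases z <;> simp [PiLp.smul_apply, smul_eq_mul] <;> field_simp <;>
          nlinarith [h]
    obtain ⟨t, ht⟩ := hmj
    have hsum3 : w i • m i + w j • m j + w k • m k = 0 := by
      rw [← sum3 (fun n => w n • m n) hij hik hjk]; exact hmsum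
    have hmk : m k = ((w k)⁻¹ * (-(w i + t * w j))) • m i := by
      have hwk : w k ≠ 0 := ne_of_gt (hw k)
      have h2 : w k • m k = (-(w i + t * w j)) • m i := by
        rw [ht] at hsum3
        rw [neg_smul, eq_neg_iff_add_eq_zero, add_smul]
        rw [smul_smul] at hsum3
        linear_combination (norm := module) hsum3
      rw [mul_smul, ← h2, smul_smul, inv_mul_cancel₀ hwk, one_smul]
    rw [affineIndependent_iff_not_collinear] at hA
    apply hA
    rw [collinear_iff_exists_forall_eq_smul_vadd]
    refine ⟨A₀, m i, ?_⟩
    rintro p ⟨n, rfl⟩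
    have hAeq : ∀ r : Fin 3, ∀ s : ℝ, m r = s • m i → A r = (-s) • m i +ᵥ A₀ := by
      intro r s hs
      have hs' : A₀ - A r = s • m i := by rw [hmiq r]; exact hs
      rw [vadd_eq_add]
      linear_combination (norm := module) (-1 : ℝ) • hs' 
    rcases fin3_cases hij hik hjk n with rfl | rfl | rfl
    · exact ⟨-1, hAeq n 1 (one_smul ℝ (m n)).symm⟩
    · exact ⟨-t, hAeq n t ht⟩
    · exact ⟨-((w n)⁻¹ * (-(w i + t * w j))), hAeq n _ hmk⟩
  -- angles and their sines
  have hang : ∀ p q, ∠ (A p) A₀ (A q) = InnerProductGeometry.angle (m p) (m q) := by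
    intro p q
    unfold EuclideanGeometry.angle
    rw [vsub_eq_sub, vsub_eq_sub, ← InnerProductGeometry.angle_neg_neg]
    congr 1 <;> simp [hmdef]
  have hsin : ∀ p q, Real.sin (∠ (A p) A₀ (A q)) * (‖m p‖ * ‖m q‖)
      = |m p 0 * m q 1 - m p 1 * m q 0| := by
    intro p q
    rw [hang p q, sin_angle_eq]
  have hsinpos : ∀ p q, p ≠ q → 0 < Real.sin (∠ (A p) A₀ (A q)) := by
    intro p q hpq
    have h1 := hsin p q
    have h2 : (0:ℝ) < |m p 0 * m q 1 - m p 1 * m q 0| := abs_pos.mpr (homega p q hpq)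
    have h3 : (0:ℝ) < ‖m p‖ * ‖m q‖ := mul_pos (hmnorm p) (hmnorm q)
    nlinarith
  clear_value w m
  -- ratio relation in terms of sines
  have hratio : ∀ B : Fin 3 → ℝ, (∀ i, 0 < B i) → (∑ i, B i • (‖m i‖⁻¹ • m i) = 0) →
      ∀ p q r : Fin 3, p ≠ q → p ≠ r → q ≠ r →
      B p * Real.sin (∠ (A p) A₀ (A r)) = B q * Real.sin (∠ (A q) A₀ (A r)) := by
    intro B hB h0 p q r hpq hpr hqr
    have habs := fermat_ratio m hmnorm B hB hpq hpr hqr h0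
    have hinvp : ‖m p‖⁻¹ * ‖m p‖ = 1 := inv_mul_cancel₀ (ne_of_gt (hmnorm p))
    have hinvq : ‖m q‖⁻¹ * ‖m q‖ = 1 := inv_mul_cancel₀ (ne_of_gt (hmnorm q))
    have h2 : B p * Real.sin (∠ (A p) A₀ (A r)) * ‖m r‖
        = B q * Real.sin (∠ (A q) A₀ (A r)) * ‖m r‖ := by
      have e1 : B p * Real.sin (∠ (A p) A₀ (A r)) * ‖m r‖
          = (B p * ‖m p‖⁻¹) * (Real.sin (∠ (A p) A₀ (A r)) * (‖m p‖ * ‖m r‖)) := by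
        linear_combination (-(B p * Real.sin (∠ (A p) A₀ (A r)) * ‖m r‖)) * hinvp
      have e2 : B q * Real.sin (∠ (A q) A₀ (A r)) * ‖m r‖
          = (B q * ‖m q‖⁻¹) * (Real.sin (∠ (A q) A₀ (A r)) * (‖m q‖ * ‖m r‖)) := by
        linear_combination (-(B q * Real.sin (∠ (A q) A₀ (A r)) * ‖m r‖)) * hinvq
      rw [e1, e2, hsin p r, hsin q r]
      linear_combination habs
    exact mul_right_cancel₀ (ne_of_gt (hmnorm r)) h2
  -- the explicit formulas for any admissible weights
  have main : ∀ B : Fin 3 → ℝ, (∀ i, 0 < B i) → (∑ i, B i = c) →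
      (∀ X : EuclideanSpace ℝ (Fin 2),
        ∑ i, B i * ‖A₀ - A i‖ ≤ ∑ i, B i * ‖X - A i‖) →
      ∀ i j k : Fin 3, i ≠ j → i ≠ k → j ≠ k →
        B i = c / (1 + Real.sin (∠ (A j) A₀ (A i)) / Real.sin (∠ (A j) A₀ (A k))
            + Real.sin (∠ (A k) A₀ (A i)) / Real.sin (∠ (A j) A₀ (A k))) ∧
        B i = c * Real.sin (∠ (A j) A₀ (A k))
            / (Real.sin (∠ (A j) A₀ (A k)) + Real.sin (∠ (A i) A₀ (A j))
              + Real.sin (∠ (A i) A₀ (A k))) := by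
    intro B hB hBsum hmin i j k hij hik hjk
    have h0 := fermat_crit A A₀ hne B hB hmin
    simp only [hmiq] at h0
    have r1 : B i * Real.sin (∠ (A i) A₀ (A k)) = B j * Real.sin (∠ (A j) A₀ (A k)) :=
      hratio B hB h0 i j k hij hik hjk
    have r2 : B i * Real.sin (∠ (A i) A₀ (A j)) = B k * Real.sin (∠ (A k) A₀ (A j)) :=
      hratio B hB h0 i k j hik hij (Ne.symm hjk)
    have hsym1 : Real.sin (∠ (A k) A₀ (A j)) = Real.sin (∠ (A j) A₀ (A k)) := by
      rw [EuclideanGeometry.angle_comm]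
    have hsym2 : Real.sin (∠ (A j) A₀ (A i)) = Real.sin (∠ (A i) A₀ (A j)) := by
      rw [EuclideanGeometry.angle_comm]
    have hsym3 : Real.sin (∠ (A k) A₀ (A i)) = Real.sin (∠ (A i) A₀ (A k)) := by
      rw [EuclideanGeometry.angle_comm]
    rw [hsym1] at r2
    have hsumB : B i + B j + B k = c := by rw [← sum3 B hij hik hjk]; exact hBsum
    have ps : 0 < Real.sin (∠ (A j) A₀ (A k)) := hsinpos j k hjk
    have pij : 0 < Real.sin (∠ (A i) A₀ (A j)) := hsinpos i j hij
    have pik : 0 < Real.sin (∠ (A i) A₀ (A k)) := hsinpos i k hik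
    constructor
    · rw [hsym2, hsym3]
      rw [eq_div_iff (by positivity)]
      field_simp
      linear_combination r1 + r2 + Real.sin (∠ (A j) A₀ (A k)) * hsumB
    · rw [eq_div_iff (by positivity)]
      linear_combination r1 + r2 + Real.sin (∠ (A j) A₀ (A k)) * hsumB
  -- existence of admissible weights
  set D : ℝ := ∑ n, w n * ‖m n‖ with hDdef
  have hDpos : 0 < D := by
    refine Finset.sum_pos (fun i _ => mul_pos (hwpos i) (hmnorm i)) Finset.univ_nonempty
  have hDne : D ≠ 0 := ne_of_gt hDpos
  set B₀ : Fin 3 → ℝ := fun i => c * (w i * ‖m i‖) / D with hB₀def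
  have hB₀pos : ∀ i, 0 < B₀ i := fun i => by
    rw [hB₀def]
    exact div_pos (mul_pos hc (mul_pos (hwpos i) (hmnorm i))) hDpos
  have hB₀sum : ∑ i, B₀ i = c := by
    have h1 : ∀ i : Fin 3, B₀ i = (w i * ‖m i‖) * (c/D) := fun i => by rw [hB₀def]; ring
    rw [Finset.sum_congr rfl fun i _ => h1 i, ← Finset.sum_mul, ← hDdef, mul_comm,
      div_mul_cancel₀ c hDne]
  have hB₀crit : ∑ i, B₀ i • (‖m i‖⁻¹ • m i) = 0 := by
    have h1 : ∀ i : Fin 3, B₀ i • (‖m i‖⁻¹ • m i) = (c/D) • (w i • m i) := by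
      intro i
      rw [hB₀def, smul_smul, smul_smul]
      congr 1
      have h1 : ‖m i‖ * ‖m i‖⁻¹ = 1 := mul_inv_cancel₀ (ne_of_gt (hmnorm i))
      linear_combination (c * w i * D⁻¹) * h1
    rw [Finset.sum_congr rfl fun i _ => h1 i, ← Finset.smul_sum, hmsum, smul_zero]
  have hB₀min : ∀ X : EuclideanSpace ℝ (Fin 2),
      ∑ i, B₀ i * ‖A₀ - A i‖ ≤ ∑ i, B₀ i * ‖X - A i‖ := by
    intro X
    exact fermat_suff A A₀ hne B₀ (fun i => le_of_lt (hB₀pos i))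
      (by simp only [hmiq]; exact hB₀crit) X
  refine ⟨⟨B₀, ⟨hB₀pos, hB₀sum, hB₀min⟩, ?_⟩, main⟩
  intro B hBand
  obtain ⟨hB1, hB2, hB3⟩ := hBand
  funext i
  obtain ⟨j, k, hij, hik, hjk⟩ := fin3_other i
  have f1 := (main B hB1 hB2 hB3 i j k hij hik hjk).1
  have f2 := (main B₀ hB₀pos hB₀sum hB₀min i j k hij hik hjk).1
  rw [f1, ← f2]
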